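/- Let n ≥ 5 and let (t, e) be a permissible pair of elements of T_n with t an odd permutation and e ≠ id. Then φ_{t,e} is a left identity for the singular part of the endomorphism monoid: for every semigroup endomorphism α of T_n that is not bijective, α(φ_{t,e}(x)) = α(x) for all x ∈ T_n. -/

import Mathlib

/-- `s : Fin n → Fin n` is an odd permutation if it is the underlying function of some
permutation of sign `-1`. -/
def IsOddPerm {n : ℕ} (s : Fin n → Fin n) : Prop :=
  ∃ σ : Equiv.Perm (Fin n), Equiv.Perm.sign σ = -1 ∧ ⇑σ = s

/-- `s : Fin n → Fin n` is an even permutation if it is the underlying function of some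
permutation of sign `1`. -/
def IsEvenPerm {n : ℕ} (s : Fin n → Fin n) : Prop :=
  ∃ σ : Equiv.Perm (Fin n), Equiv.Perm.sign σ = 1 ∧ ⇑σ = s

/-- A pair `(t, e)` of elements of `T_n` is permissible if `t ∘ t ∘ t = t` and
`t ∘ e = e ∘ t = e ∘ e = e`. -/
def Permissible {n : ℕ} (t e : Fin n → Fin n) : Prop :=
  t ∘ t ∘ t = t ∧ t ∘ e = e ∧ e ∘ t = e ∧ e ∘ e = e

open Classical in
/-- For a (permissible) pair `(t, e)`, the map `φ_{t,e} : T_n → T_n` sending `s` to `t` if `s`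
is an odd permutation, to `t ∘ t` if `s` is an even permutation, and to `e` if `s` is not
bijective. -/
noncomputable def phi {n : ℕ} (t e : Fin n → Fin n) : (Fin n → Fin n) → (Fin n → Fin n) :=
  fun s => if IsOddPerm s then t else if IsEvenPerm s then t ∘ t else e

/-- `φ : T_n → T_n` is a semigroup endomorphism of `T_n` if `φ (s ∘ s') = φ s ∘ φ s'`
for all `s, s'`. -/
def IsEndo {n : ℕ} (φ : (Fin n → Fin n) → (Fin n → Fin n)) : Prop :=
  ∀ s s' : Fin n → Fin n, φ (s ∘ s') = φ s ∘ φ s'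


open Equiv Equiv.Perm Function

lemma exists_fresh {n : ℕ} (hn : 5 ≤ n) (s : Finset (Fin n)) (hs : s.card ≤ 4) :
    ∃ v, v ∉ s := by
  by_contra hcon
  push_neg at hcon
  have : (Finset.univ : Finset (Fin n)).card ≤ s.card :=
    Finset.card_le_card (fun v _ => hcon v)
  simp [Finset.card_univ] at this
  omega

lemma normal_contains_alternating {n : ℕ} (hn : 5 ≤ n)
    (N : Subgroup (Perm (Fin n))) (hN : N.Normal) (σ : Perm (Fin n)) (hσN : σ ∈ N)
    (hσ : σ ≠ 1) : alternatingGroup (Fin n) ≤ N := by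
  -- first: there is a point moved by σ
  have hmove : ∃ a, σ a ≠ a := by
    by_contra hcon
    push_neg at hcon
    exact hσ (Equiv.ext hcon)
  obtain ⟨a, ha⟩ := hmove
  set b := σ a with hb
  have hba : b ≠ a := ha
  obtain ⟨c, hc⟩ := exists_fresh hn {a, b, σ b} (by
    refine le_trans (Finset.card_insert_le _ _) ?_
    refine le_trans (Nat.succ_le_succ (Finset.card_insert_le _ _)) ?_
    simp)
  simp only [Finset.mem_insert, Finset.mem_singleton, not_or] at hc
  obtain ⟨hca, hcb, hcsb⟩ := hc
  have hsbb : σ b ≠ b := fun hh => hba (σ.injective (hh.trans hb))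
  have hbc : b ≠ c := fun hh => hcb hh.symm
  -- the commutator
  have hρN : (swap b c * σ * (swap b c)⁻¹) * σ⁻¹ ∈ N :=
    mul_mem (hN.conj_mem σ hσN (swap b c)) (inv_mem hσN)
  have hconj : σ * swap b c * σ⁻¹ = swap (σ b) (σ c) := (swap_apply_apply σ b c).symm
  have hρeq : (swap b c * σ * (swap b c)⁻¹) * σ⁻¹ = swap b c * swap (σ b) (σ c) := by
    rw [← hconj, Equiv.swap_inv]
    group
  set p := σ b with hp
  set q := σ c with hq
  have hpq : p ≠ q := fun hh => hbc (σ.injective hh)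
  have hpb : p ≠ b := hsbb
  have hpc : p ≠ c := fun hh => hcsb hh.symm
  rw [hρeq] at hρN
  -- get a three-cycle in N
  have key : ∃ θ : Perm (Fin n), θ ∈ N ∧ θ.IsThreeCycle := by
    by_cases hqb : q = b
    · refine ⟨swap b c * swap p q, hρN, ?_⟩
      rw [hqb, swap_comm p b]
      exact isThreeCycle_swap_mul_swap_same hbc (Ne.symm hpb) (fun hh => hpc hh.symm)
    · by_cases hqc : q = c
      · refine ⟨swap b c * swap p q, hρN, ?_⟩
        rw [hqc, swap_comm b c, swap_comm p c]
        exact isThreeCycle_swap_mul_swap_same (Ne.symm hbc) (Ne.symm hpc) (Ne.symm hpb)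
      · -- disjoint case; pick a fresh point v
        obtain ⟨v, hv⟩ := exists_fresh hn {b, c, p, q} (by
          refine le_trans (Finset.card_insert_le _ _) ?_
          refine le_trans (Nat.succ_le_succ (Finset.card_insert_le _ _)) ?_
          refine le_trans (Nat.succ_le_succ (Nat.succ_le_succ (Finset.card_insert_le _ _))) ?_
          simp)
        simp only [Finset.mem_insert, Finset.mem_singleton, not_or] at hv
        obtain ⟨hvb, hvc, hvp, hvq⟩ := hv
        set ρ := swap b c * swap p q with hρ
        have hρ'N : (swap p v * ρ * (swap p v)⁻¹) * ρ⁻¹ ∈ N :=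
          mul_mem (hN.conj_mem ρ hρN (swap p v)) (inv_mem hρN)
        have e1 : swap p v * swap b c * (swap p v)⁻¹ = swap b c := by
          rw [← swap_apply_apply]
          congr 1
          · exact swap_apply_of_ne_of_ne (Ne.symm hpb) (fun hh => hvb hh.symm)
          · exact swap_apply_of_ne_of_ne (Ne.symm hpc) (fun hh => hvc hh.symm)
        have e2 : swap p v * swap p q * (swap p v)⁻¹ = swap v q := by
          rw [← swap_apply_apply]
          congr 1
          · exact swap_apply_left p v
          · exact swap_apply_of_ne_of_ne (Ne.symm hpq) (Ne.symm hvq)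
        have hρ'eq : (swap p v * ρ * (swap p v)⁻¹) * ρ⁻¹
            = swap b c * (swap q v * swap q p) * (swap b c)⁻¹ := by
          have expand : swap p v * ρ * (swap p v)⁻¹
              = (swap p v * swap b c * (swap p v)⁻¹) * (swap p v * swap p q * (swap p v)⁻¹) := by
            rw [hρ]; group
          rw [expand, e1, e2, hρ, mul_inv_rev, Equiv.swap_inv, Equiv.swap_inv,
            swap_comm v q, swap_comm p q]
          group
        refine ⟨_, hρ'N, ?_⟩
        rw [hρ'eq]
        have h3 : (swap q v * swap q p).IsThreeCycle :=
          isThreeCycle_swap_mul_swap_same (Ne.symm hvq) (Ne.symm hpq) (fun hh => hvp hh)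
        unfold Equiv.Perm.IsThreeCycle at *
        rw [cycleType_conj]
        exact h3
  obtain ⟨θ, hθN, hθ3⟩ := key
  -- every three-cycle is in N
  have hall3 : ∀ θ' : Perm (Fin n), θ'.IsThreeCycle → θ' ∈ N := by
    intro θ' hθ'
    have hconj : IsConj θ θ' := isConj_iff_cycleType_eq.2 (by rw [hθ3.cycleType, hθ'.cycleType])
    obtain ⟨g, hg⟩ := isConj_iff.1 hconj
    rw [← hg]
    exact hN.conj_mem θ hθN g
  rw [← closure_three_cycles_eq_alternating]
  exact Subgroup.closure_le N |>.2 (fun θ' hθ' => hall3 θ' hθ')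

lemma const_collapse {n : ℕ} (α : (Fin n → Fin n) → (Fin n → Fin n))
    (hα : IsEndo α) (hinj : ¬ Function.Injective α) :
    ∀ a b : Fin n, α (Function.const (Fin n) a) = α (Function.const (Fin n) b) := by
  have hex : ∃ x y : Fin n → Fin n, x ≠ y ∧ α x = α y := by
    by_contra hcon
    push_neg at hcon
    exact hinj (fun x y hxy => by
      by_contra hne
      exact (hcon x y hne) hxy)
  obtain ⟨x, y, hxy, hαxy⟩ := hex
  have hz : ∃ z, x z ≠ y z := by
    by_contra hcon
    push_neg at hcon
    exact hxy (funext hcon)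
  obtain ⟨z, hz⟩ := hz
  have key : α (Function.const (Fin n) (x z)) = α (Function.const (Fin n) (y z)) := by
    have h1 : x ∘ Function.const (Fin n) z = Function.const (Fin n) (x z) := rfl
    have h2 : y ∘ Function.const (Fin n) z = Function.const (Fin n) (y z) := rfl
    calc α (Function.const (Fin n) (x z)) = α x ∘ α (Function.const (Fin n) z) := by
          rw [← h1, hα]
      _ = α y ∘ α (Function.const (Fin n) z) := by rw [hαxy]
      _ = α (Function.const (Fin n) (y z)) := by rw [← hα, h2]
  intro a b
  classical
  set g : Fin n → Fin n := fun w => if w = x z then a else b with hg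
  have h1 : g ∘ Function.const (Fin n) (x z) = Function.const (Fin n) a := by
    funext w
    show (if x z = x z then a else b) = a
    rw [if_pos rfl]
  have h2 : g ∘ Function.const (Fin n) (y z) = Function.const (Fin n) b := by
    funext w
    show (if y z = x z then a else b) = b
    rw [if_neg (fun hh => hz hh.symm)]
  calc α (Function.const (Fin n) a) = α g ∘ α (Function.const (Fin n) (x z)) := by
        rw [← hα, h1]
    _ = α g ∘ α (Function.const (Fin n) (y z)) := by rw [key]
    _ = α (Function.const (Fin n) b) := by rw [← hα, h2]

lemma perm_collapse {n : ℕ} (hn : 5 ≤ n) (α : (Fin n → Fin n) → (Fin n → Fin n))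
    (hα : IsEndo α) (hinj : ¬ Function.Injective α) :
    ∃ σ : Perm (Fin n), σ ≠ 1 ∧ α ⇑σ = α id := by
  classical
  by_contra hcon
  push_neg at hcon
  -- then σ ↦ α ⇑σ is injective
  have hpinj : Function.Injective (fun σ : Perm (Fin n) => α ⇑σ) := by
    intro σ τ hστ'
    have hστ : α ⇑σ = α ⇑τ := hστ'
    have hρ : α ⇑(σ * τ⁻¹) = α id := by
      have hcoe : (⇑σ ∘ ⇑τ⁻¹ : Fin n → Fin n) = ⇑(σ * τ⁻¹) := rfl
      calc α ⇑(σ * τ⁻¹) = α ⇑σ ∘ α ⇑τ⁻¹ := by rw [← hcoe, hα]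
        _ = α ⇑τ ∘ α ⇑τ⁻¹ := by rw [hστ]
        _ = α (⇑τ ∘ ⇑τ⁻¹) := (hα _ _).symm
        _ = α id := by
            rw [show (⇑τ ∘ ⇑τ⁻¹ : Fin n → Fin n) = id from funext (fun w => τ.apply_symm_apply w)]
    by_contra hne
    exact hcon (σ * τ⁻¹) (fun hh => hne (by
      have := congrArg (· * τ) hh
      simpa [mul_assoc] using this)) hρ
  -- notation
  set f := α id with hf
  have hcomp : ∀ s s' : Fin n → Fin n, α (s ∘ s') = α s ∘ α s' := hα
  have hff : f ∘ f = f := by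
    rw [hf, ← hcomp]; rfl
  have hfL : ∀ s, f ∘ α s = α s := by
    intro s
    rw [hf, ← hcomp]; rfl
  have hfR : ∀ s, α s ∘ f = α s := by
    intro s
    rw [hf, ← hcomp]; rfl
  have hinvf : ∀ σ : Perm (Fin n), α ⇑σ ∘ α ⇑σ⁻¹ = f := by
    intro σ
    rw [← hcomp, hf,
      show (⇑σ ∘ ⇑σ⁻¹ : Fin n → Fin n) = id from funext (fun w => σ.apply_symm_apply w)]
  -- constants collapse
  have hc := const_collapse α hα hinj
  have h0 : (0 : ℕ) < n := by omega
  set pt : Fin n := ⟨0, h0⟩ with hpt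
  set c := α (Function.const (Fin n) pt) with hcc
  have hfixc : ∀ σ : Perm (Fin n), α ⇑σ ∘ c = c := by
    intro σ
    rw [hcc, ← hcomp]
    have : (⇑σ ∘ Function.const (Fin n) pt) = Function.const (Fin n) (σ pt) := rfl
    rw [this]
    exact hc _ _
  have hfc : f ∘ c = c := by
    rw [hcc, hf, ← hcomp]; rfl
  -- the good set
  set S : Set (Fin n) := {w | w ∈ Set.range f ∧ w ∉ Set.range c} with hS
  have hfixf : ∀ w ∈ Set.range f, f w = w := by
    rintro w ⟨u, rfl⟩
    exact congrFun hff u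
  have hgS : ∀ (σ : Perm (Fin n)) (w : Fin n), w ∈ S → α ⇑σ w ∈ S := by
    rintro σ w ⟨⟨u, hu⟩, hnc⟩
    constructor
    · exact ⟨α ⇑σ w, congrFun (hfL ⇑σ) w⟩
    · rintro ⟨m, hm⟩
      apply hnc
      refine ⟨m, ?_⟩
      have h1 : α ⇑σ⁻¹ (α ⇑σ w) = w := by
        have := congrFun (hinvf σ⁻¹) w
        simp only [inv_inv] at this
        calc α ⇑σ⁻¹ (α ⇑σ w) = (α ⇑σ⁻¹ ∘ α ⇑σ) w := rfl
          _ = f w := by rw [← hinvf σ⁻¹]; simp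
          _ = w := hfixf w ⟨u, hu⟩
      have h2 : α ⇑σ⁻¹ (c m) = c m := congrFun (hfixc σ⁻¹) m
      rw [← h1, ← hm, h2, hm]
  -- build permutations of S
  have hinvS : ∀ (σ : Perm (Fin n)) (w : Fin n), α ⇑σ⁻¹ (α ⇑σ w) = f w := by
    intro σ w
    calc α ⇑σ⁻¹ (α ⇑σ w) = (α ⇑σ⁻¹ ∘ α ⇑σ) w := rfl
      _ = α (⇑σ⁻¹ ∘ ⇑σ) w := by rw [hcomp]
      _ = f w := by
          rw [show (⇑σ⁻¹ ∘ ⇑σ : Fin n → Fin n) = id from funext (fun u => σ.symm_apply_apply u)]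
  set E : Perm (Fin n) → Perm ↥S := fun σ =>
    { toFun := fun w => ⟨α ⇑σ w.1, hgS σ w.1 w.2⟩
      invFun := fun w => ⟨α ⇑σ⁻¹ w.1, hgS σ⁻¹ w.1 w.2⟩
      left_inv := by
        rintro ⟨w, hw⟩
        apply Subtype.ext
        show α ⇑σ⁻¹ (α ⇑σ w) = w
        rw [hinvS σ w]
        exact hfixf w hw.1
      right_inv := by
        rintro ⟨w, hw⟩
        apply Subtype.ext
        show α ⇑σ (α ⇑σ⁻¹ w) = w
        have h5 := hinvS σ⁻¹ w
        simp only [inv_inv] at h5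
        rw [h5]
        exact hfixf w hw.1 } with hE
  have hEinj : Function.Injective E := by
    intro σ τ hστ
    apply hpinj
    simp only
    funext w
    have hw : α ⇑σ (f w) = α ⇑τ (f w) := by
      by_cases hmem : f w ∈ Set.range c
      · obtain ⟨m, hm⟩ := hmem
        rw [← hm]
        have e1 : α ⇑σ (c m) = c m := congrFun (hfixc σ) m
        have e2 : α ⇑τ (c m) = c m := congrFun (hfixc τ) m
        rw [e1, e2]
      · have hfw : f w ∈ S := ⟨⟨w, rfl⟩, hmem⟩
        have := congrArg (fun (g : Perm ↥S) => (g ⟨f w, hfw⟩ : ↥S).1) hστ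
        simpa [hE] using this
    calc α ⇑σ w = (α ⇑σ ∘ f) w := by rw [hfR]
      _ = (α ⇑τ ∘ f) w := hw
      _ = α ⇑τ w := by rw [hfR]
  -- cardinality contradiction
  haveI : Fintype ↥S := Fintype.ofFinite ↥S
  have hcard1 : Fintype.card (Perm (Fin n)) ≤ Fintype.card (Perm ↥S) :=
    Fintype.card_le_of_injective E hEinj
  have hcardS : Fintype.card ↥S < n := by
    have hne : c pt ∉ Set.range (fun w : ↥S => w.1) := by
      rintro ⟨⟨w, hw⟩, hww⟩
      exact hw.2 ⟨pt, hww.symm⟩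
    have := Fintype.card_lt_of_injective_of_notMem (fun w : ↥S => w.1)
      Subtype.val_injective hne
    simpa using this
  rw [Fintype.card_perm, Fintype.card_perm, Fintype.card_fin] at hcard1
  have h1 : Nat.factorial (Fintype.card ↥S) ≤ Nat.factorial (n-1) :=
    Nat.factorial_le (by omega)
  have h2 : Nat.factorial (n-1) < Nat.factorial n := (Nat.factorial_lt (by omega)).2 (by omega)
  exact absurd ((hcard1.trans h1).trans_lt h2) (lt_irrefl _)

/-- For `n ≥ 5` and a permissible pair `(t, e)` with `t` an odd permutation and
`e ≠ id`, the map `φ_{t,e}` is a left identity for the singular part of the endomorphism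
monoid. -/
theorem odd_type_left_identity (n : ℕ) (hn : 5 ≤ n) (t e : Fin n → Fin n)
    (h : Permissible t e) (ht : IsOddPerm t) (he : e ≠ id)
    (α : (Fin n → Fin n) → (Fin n → Fin n)) (hα : IsEndo α)
    (hbij : ¬ Function.Bijective α) :
    ∀ x : Fin n → Fin n, α (phi t e x) = α x := by
  classical
  have hninj : ¬ Function.Injective α := fun hcon =>
    hbij (Finite.injective_iff_bijective.1 hcon)
  set f := α id with hf
  have hcomp : ∀ s s' : Fin n → Fin n, α (s ∘ s') = α s ∘ α s' := hα
  -- all even permutations are collapsed to f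
  have hA : ∀ τ : Perm (Fin n), Equiv.Perm.sign τ = 1 → α ⇑τ = f := by
    obtain ⟨σ₀, hσ₀ne, hσ₀⟩ := perm_collapse hn α hα hninj
    set N : Subgroup (Perm (Fin n)) :=
      { carrier := {τ : Perm (Fin n) | α ⇑τ = f}
        one_mem' := by
          show α ⇑(1 : Perm (Fin n)) = f
          rw [Perm.coe_one, hf]
        mul_mem' := by
          intro τ ρ hτ hρ
          have hτ' : α ⇑τ = f := hτ
          have hρ' : α ⇑ρ = f := hρ
          show α ⇑(τ * ρ) = f
          have hco : (⇑(τ * ρ) : Fin n → Fin n) = ⇑τ ∘ ⇑ρ := rfl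
          rw [hco, hcomp, hτ', hρ', hf, ← hcomp]
          rfl
        inv_mem' := by
          intro τ hτ
          have hτ' : α ⇑τ = f := hτ
          show α ⇑τ⁻¹ = f
          calc α ⇑τ⁻¹ = α (id ∘ ⇑τ⁻¹) := rfl
            _ = f ∘ α ⇑τ⁻¹ := by rw [hcomp, hf]
            _ = α ⇑τ ∘ α ⇑τ⁻¹ := by rw [hτ']
            _ = α (⇑τ ∘ ⇑τ⁻¹) := (hcomp _ _).symm
            _ = f := by
                rw [show (⇑τ ∘ ⇑τ⁻¹ : Fin n → Fin n) = id from
                  funext (fun w => τ.apply_symm_apply w), hf] } with hN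
    have hNnormal : N.Normal := by
      constructor
      intro τ hτ g
      show α ⇑(g * τ * g⁻¹) = f
      have hmem : α ⇑τ = f := hτ
      have hcoe : (⇑(g * τ * g⁻¹) : Fin n → Fin n) = ⇑g ∘ (⇑τ ∘ ⇑g⁻¹) := by
        funext w; rfl
      rw [hcoe, hcomp, hcomp, hmem]
      have h1 : f ∘ α ⇑g⁻¹ = α ⇑g⁻¹ := by
        rw [hf, ← hcomp]; rfl
      rw [h1, ← hcomp,
        show (⇑g ∘ ⇑g⁻¹ : Fin n → Fin n) = id from funext (fun w => g.apply_symm_apply w), hf]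
    have halt := normal_contains_alternating hn N hNnormal σ₀ hσ₀ hσ₀ne
    intro τ hτsign
    exact halt (mem_alternatingGroup.2 hτsign)
  -- all odd permutations have equal image
  have hOddEq : ∀ σ τ : Perm (Fin n), Equiv.Perm.sign σ = -1 → Equiv.Perm.sign τ = -1 →
      α ⇑σ = α ⇑τ := by
    intro σ τ hσ hτ
    have hsign : Equiv.Perm.sign (τ⁻¹ * σ) = 1 := by
      rw [map_mul, map_inv, hσ, hτ]
      decide
    have hdecomp : (⇑σ : Fin n → Fin n) = ⇑τ ∘ ⇑(τ⁻¹ * σ) := by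
      funext w
      show σ w = τ ((τ⁻¹ * σ) w)
      simp [Perm.mul_apply]
    rw [hdecomp, hcomp, hA _ hsign, hf, ← hcomp]
    rfl
  -- the distinguished idempotent
  have h0 : (0 : ℕ) < n := by omega
  have h1 : (1 : ℕ) < n := by omega
  set u₀ : Fin n := ⟨0, h0⟩ with hu₀
  set v₀ : Fin n := ⟨1, h1⟩ with hv₀
  have hu₀v₀ : u₀ ≠ v₀ := by
    intro hcon
    have := congrArg Fin.val hcon
    simp [hu₀, hv₀] at this
  set eps : Fin n → Fin n → (Fin n → Fin n) :=
    fun u v => fun z => if z = u then v else z with heps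
  set a := α (eps u₀ v₀) with ha
  have haf : a ∘ f = a := by rw [ha, hf, ← hcomp]; rfl
  have hfa : f ∘ a = a := by rw [ha, hf, ← hcomp]; rfl
  -- all "elementary collapsings" have the same image a
  have hE : ∀ u v : Fin n, u ≠ v → α (eps u v) = a := by
    intro u v huv
    -- construct an even permutation sending u₀ to u and v₀ to v
    have hνex : ∃ ν : Perm (Fin n), Equiv.Perm.sign ν = 1 ∧ ν u₀ = u ∧ ν v₀ = v := by
      set s1 := Equiv.swap u₀ u with hs1
      set b := s1 v₀ with hb
      set s2 := Equiv.swap b v with hs2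
      set π := s2 * s1 with hπ
      have hub : u ≠ b := by
        intro hcon
        have : s1 u₀ = s1 v₀ := by rw [swap_apply_left, hcon, hb]
        exact hu₀v₀ (s1.injective this)
      have hπu : π u₀ = u := by
        rw [hπ, Perm.mul_apply, hs1, swap_apply_left]
        exact swap_apply_of_ne_of_ne hub huv
      have hπv : π v₀ = v := by
        rw [hπ, Perm.mul_apply, ← hb, hs2, swap_apply_left]
      rcases Int.units_eq_one_or (Equiv.Perm.sign π) with hsπ | hsπ
      · exact ⟨π, hsπ, hπu, hπv⟩
      · obtain ⟨p, hp⟩ := exists_fresh hn {u₀, v₀} (by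
          refine le_trans (Finset.card_insert_le _ _) ?_
          simp)
        obtain ⟨q, hq⟩ := exists_fresh hn {u₀, v₀, p} (by
          refine le_trans (Finset.card_insert_le _ _) ?_
          refine le_trans (Nat.succ_le_succ (Finset.card_insert_le _ _)) ?_
          simp)
        simp only [Finset.mem_insert, Finset.mem_singleton, not_or] at hp hq
        refine ⟨π * Equiv.swap p q, ?_, ?_, ?_⟩
        · rw [map_mul, hsπ, sign_swap (fun hcon => hq.2.2 hcon.symm)]
          decide
        · rw [Perm.mul_apply, swap_apply_of_ne_of_ne (fun hc => hp.1 hc.symm)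
            (fun hc => hq.1 hc.symm), hπu]
        · rw [Perm.mul_apply, swap_apply_of_ne_of_ne (fun hc => hp.2 hc.symm)
            (fun hc => hq.2.1 hc.symm), hπv]
    obtain ⟨ν, hνsign, hνu, hνv⟩ := hνex
    have hconj : (⇑ν ∘ (eps u₀ v₀ ∘ ⇑ν⁻¹)) = eps u v := by
      funext z
      show ν (eps u₀ v₀ (ν⁻¹ z)) = eps u v z
      by_cases hz : z = u
      · have hν' : ν⁻¹ z = u₀ := by
          rw [hz, ← hνu]; exact ν.symm_apply_apply u₀
        have e1 : eps u₀ v₀ u₀ = v₀ := by rw [heps]; simp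
        have e2 : eps u v z = v := by rw [heps]; simp [hz]
        rw [hν', e1, e2, hνv]
      · have hν' : ν⁻¹ z ≠ u₀ := fun hcon => hz (by rw [← (show ν (ν⁻¹ z) = z from ν.apply_symm_apply z), hcon, hνu])
        have e1 : eps u₀ v₀ (ν⁻¹ z) = ν⁻¹ z := by rw [heps]; exact if_neg hν'
        have e2 : eps u v z = z := by rw [heps]; simp [hz]
        rw [e1, e2, show ν (ν⁻¹ z) = z from ν.apply_symm_apply z]
    have hsigninv : Equiv.Perm.sign ν⁻¹ = 1 := by
      rw [map_inv, hνsign]; rfl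
    calc α (eps u v) = α (⇑ν ∘ (eps u₀ v₀ ∘ ⇑ν⁻¹)) := by rw [hconj]
      _ = α ⇑ν ∘ α (eps u₀ v₀ ∘ ⇑ν⁻¹) := hcomp _ _
      _ = α ⇑ν ∘ (α (eps u₀ v₀) ∘ α ⇑ν⁻¹) := by rw [hcomp]
      _ = f ∘ (a ∘ f) := by rw [hA ν hνsign, hA ν⁻¹ hsigninv, ← ha]
      _ = a := by rw [haf, hfa]
  -- odd permutations absorb into a on the left
  have hw : ∀ σ : Perm (Fin n), Equiv.Perm.sign σ = -1 → α ⇑σ ∘ a = a := by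
    intro σ hσ
    have hsw : Equiv.Perm.sign (Equiv.swap u₀ v₀) = -1 := sign_swap hu₀v₀
    rw [hOddEq σ (Equiv.swap u₀ v₀) hσ hsw, ha, ← hcomp]
    have hkey : (⇑(Equiv.swap u₀ v₀) ∘ eps u₀ v₀) = eps v₀ u₀ := by
      funext z
      show Equiv.swap u₀ v₀ (eps u₀ v₀ z) = eps v₀ u₀ z
      by_cases h1 : z = u₀
      · have e1 : eps u₀ v₀ z = v₀ := by rw [heps]; simp [h1]
        have e2 : eps v₀ u₀ z = z := by rw [heps]; simp [h1, hu₀v₀]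
        rw [e1, e2, swap_apply_right, h1]
      · by_cases h2 : z = v₀
        · have e1 : eps u₀ v₀ z = z := by rw [heps]; simp [h1]
          have e2 : eps v₀ u₀ z = u₀ := by rw [heps]; simp [h2]
          rw [e1, e2, h2, swap_apply_right]
        · have e1 : eps u₀ v₀ z = z := by rw [heps]; simp [h1]
          have e2 : eps v₀ u₀ z = z := by rw [heps]; simp [h2]
          rw [e1, e2, swap_apply_of_ne_of_ne h1 h2]
    rw [hkey]
    rw [hE v₀ u₀ (Ne.symm hu₀v₀)]
  have haa : a ∘ a = a := by
    have epsid : eps u₀ v₀ ∘ eps u₀ v₀ = eps u₀ v₀ := by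
      funext z
      show eps u₀ v₀ (eps u₀ v₀ z) = eps u₀ v₀ z
      by_cases h1 : z = u₀
      · have e1 : eps u₀ v₀ z = v₀ := by rw [heps]; simp [h1]
        have e2 : eps u₀ v₀ v₀ = v₀ := by rw [heps]; simp [Ne.symm hu₀v₀]
        rw [e1, e2]
      · have e1 : eps u₀ v₀ z = z := by rw [heps]; simp [h1]
        rw [e1]; exact e1
    rw [ha, ← hcomp, epsid]
  -- all singular maps are collapsed to a
  have hSgen : ∀ m : ℕ, ∀ x : Fin n → Fin n, ¬ Function.Bijective x →
      n - (Finset.image x Finset.univ).card ≤ m → α x = a := by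
    intro m
    induction m with
    | zero =>
      intro x hx hle
      exfalso
      have hcard : (Finset.image x Finset.univ).card ≤ n := by
        have := Finset.card_le_univ (Finset.image x Finset.univ)
        simpa using this
      have heq : (Finset.image x Finset.univ).card = Fintype.card (Fin n) := by
        simp only [Fintype.card_fin]; omega
      have huniv : Finset.image x Finset.univ = Finset.univ := Finset.eq_univ_of_card _ heq
      have hsurj : Function.Surjective x := by
        intro w
        have hw : w ∈ Finset.image x Finset.univ := by rw [huniv]; exact Finset.mem_univ w
        obtain ⟨z, _, hz⟩ := Finset.mem_image.1 hw
        exact ⟨z, hz⟩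
      exact hx (Finite.surjective_iff_bijective.1 hsurj)
    | succ m ih =>
      intro x hx hle
      have hninjx : ¬ Function.Injective x := fun hcon =>
        hx (Finite.injective_iff_bijective.1 hcon)
      have hpair : ∃ u v, u ≠ v ∧ x u = x v := by
        by_contra hcon; push_neg at hcon
        exact hninjx (fun u v huv => by
          by_contra hne
          exact (hcon u v hne) huv)
      obtain ⟨u, v, huv, hxuv⟩ := hpair
      have hnsurj : ∃ m₀, ∀ z, x z ≠ m₀ := by
        by_contra hcon; push_neg at hcon
        exact hx (Finite.surjective_iff_bijective.1 (fun w => hcon w))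
      obtain ⟨m₀, hm₀⟩ := hnsurj
      set y := Function.update x u m₀ with hy
      have hdecomp : x = y ∘ eps u v := by
        funext z
        show x z = y (eps u v z)
        by_cases hz : z = u
        · have e2 : eps u v z = v := by rw [heps]; simp [hz]
          rw [e2, hy, Function.update_of_ne (Ne.symm huv), hz, hxuv]
        · have e2 : eps u v z = z := by rw [heps]; simp [hz]
          rw [e2, hy, Function.update_of_ne hz]
      rw [hdecomp, hcomp, hE u v huv]
      by_cases hyb : Function.Bijective y
      · set σ := Equiv.ofBijective y hyb with hσ
        have hcoe : ⇑σ = y := rfl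
        rcases Int.units_eq_one_or (Equiv.Perm.sign σ) with hs | hs
        · rw [← hcoe, hA σ hs]; exact hfa
        · rw [← hcoe]; exact hw σ hs
      · have him : Finset.image y Finset.univ = insert m₀ (Finset.image x Finset.univ) := by
          ext w
          simp only [Finset.mem_image, Finset.mem_insert, Finset.mem_univ, true_and]
          constructor
          · rintro ⟨z, hz⟩
            by_cases hzu : z = u
            · left; rw [← hz, hzu, hy, Function.update_self]
            · right; exact ⟨z, by rw [← hz, hy, Function.update_of_ne hzu]⟩
          · rintro (rfl | ⟨z, hz⟩)
            · exact ⟨u, by rw [hy, Function.update_self]⟩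
            · by_cases hzu : z = u
              · refine ⟨v, ?_⟩
                rw [hy, Function.update_of_ne (Ne.symm huv), ← hxuv, ← hzu, hz]
              · exact ⟨z, by rw [hy, Function.update_of_ne hzu, hz]⟩
        have hm₀nm : m₀ ∉ Finset.image x Finset.univ := by
          simp only [Finset.mem_image, Finset.mem_univ, true_and, not_exists]
          exact fun z => hm₀ z
        have hcardy : (Finset.image y Finset.univ).card
            = (Finset.image x Finset.univ).card + 1 := by
          rw [him, Finset.card_insert_of_notMem hm₀nm]
        have hbound : n - (Finset.image y Finset.univ).card ≤ m := by omega
        rw [ih y hyb hbound]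
        exact haa
  have hS : ∀ x : Fin n → Fin n, ¬ Function.Bijective x → α x = a :=
    fun x hx => hSgen n x hx (by omega)
  -- final case analysis
  intro x
  by_cases hodd : IsOddPerm x
  · simp only [phi]
    rw [if_pos hodd]
    obtain ⟨σt, hσts, hσtc⟩ := ht
    obtain ⟨σx, hσxs, hσxc⟩ := hodd
    rw [← hσtc, ← hσxc]
    exact hOddEq σt σx hσts hσxs
  · by_cases heven : IsEvenPerm x
    · simp only [phi]
      rw [if_neg hodd, if_pos heven]
      obtain ⟨σt, hσts, hσtc⟩ := ht
      obtain ⟨σx, hσxs, hσxc⟩ := heven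
      have h2 : (t ∘ t) = ⇑(σt * σt) := by rw [Perm.coe_mul, hσtc]
      have hsq : Equiv.Perm.sign (σt * σt) = 1 := by
        rw [map_mul, hσts]
        decide
      rw [h2, hA (σt * σt) hsq, ← hσxc, hA σx hσxs]
    · simp only [phi]
      rw [if_neg hodd, if_neg heven]
      have hxnb : ¬ Function.Bijective x := by
        intro hb
        rcases Int.units_eq_one_or (Equiv.Perm.sign (Equiv.ofBijective x hb)) with hs | hs
        · exact heven ⟨Equiv.ofBijective x hb, hs, rfl⟩
        · exact hodd ⟨Equiv.ofBijective x hb, hs, rfl⟩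
      have henb : ¬ Function.Bijective e := by
        intro hb
        apply he
        funext z
        have : e (e z) = e z := congrFun h.2.2.2 z
        exact hb.1 this
      rw [hS e henb, hS x hxnb]
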